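/- Let M ∈ U(2,1;O₂) fix q∞, i.e. M·(1,0,0)ᵗ is a complex scalar multiple of (1,0,0)ᵗ. Then M or −M lies in the subgroup of GL(3,ℂ) generated by the four matrices R₁, R₂, R₃, T. Equivalently, the stabiliser of q∞ in PU(2,1;O₂) = U(2,1;O₂)/{±I} is generated by the classes of R₁, R₂, R₃ and T. -/

import Mathlib

noncomputable section

open Matrix Complex

/-- The Gram matrix `J` of the Hermitian form
`⟨z,w⟩ = z₁ conj w₃ + z₂ conj w₂ + z₃ conj w₁` of signature (2,1). -/
def Jmat : Matrix (Fin 3) (Fin 3) ℂ := !![0,0,1; 0,1,0; 1,0,0]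

lemma Jmat_mul_Jmat : Jmat * Jmat = 1 := by
  simp [Jmat, Matrix.mul_fin_three, Matrix.one_fin_three]

/-- A matrix satisfying `Mᴴ J M = J` (i.e. `M ∈ U(2,1;ℂ)`), viewed as an element of
`GL (Fin 3) ℂ`; its inverse is `J Mᴴ J`. -/
def toGL (M : Matrix (Fin 3) (Fin 3) ℂ) (h : Mᴴ * Jmat * M = Jmat) : GL (Fin 3) ℂ where
  val := M
  inv := Jmat * Mᴴ * Jmat
  inv_val := by
    calc (Jmat * Mᴴ * Jmat) * M = Jmat * (Mᴴ * Jmat * M) := by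
          simp only [Matrix.mul_assoc]
    _ = 1 := by rw [h, Jmat_mul_Jmat]
  val_inv := by
    apply mul_eq_one_comm.mp
    calc (Jmat * Mᴴ * Jmat) * M = Jmat * (Mᴴ * Jmat * M) := by
          simp only [Matrix.mul_assoc]
    _ = 1 := by rw [h, Jmat_mul_Jmat]

/-- The ring of integers `O₂ = ℤ[i√2]` of `ℚ(√-2)`, as a subset of `ℂ`. -/
def O2 : Set ℂ := {z | ∃ a b : ℤ, z = (a : ℂ) + (b : ℂ) * (Complex.I * (√2 : ℝ))}

def I₀ : Matrix (Fin 3) (Fin 3) ℂ := !![0,0,1; 0,-1,0; 1,0,0]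

def R₁ : Matrix (Fin 3) (Fin 3) ℂ := !![1,0,0; 0,-1,0; 0,0,1]

def R₂ : Matrix (Fin 3) (Fin 3) ℂ := !![1,2,-2; 0,-1,2; 0,0,1]

def R₃ : Matrix (Fin 3) (Fin 3) ℂ :=
  !![1, -(Complex.I*(√2:ℝ)), -1; 0, -1, Complex.I*(√2:ℝ); 0,0,1]

def T : Matrix (Fin 3) (Fin 3) ℂ := !![1, 0, Complex.I*(√2:ℝ); 0,1,0; 0,0,1]

lemma hI₀ : I₀ᴴ * Jmat * I₀ = Jmat := by
  ext i j
  fin_cases i <;> fin_cases j <;>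
    simp [Matrix.mul_apply, Fin.sum_univ_three, Jmat, I₀, Matrix.conjTranspose_apply,
      Matrix.vecHead, Matrix.vecTail]

lemma hR₁ : R₁ᴴ * Jmat * R₁ = Jmat := by
  ext i j
  fin_cases i <;> fin_cases j <;>
    simp [Matrix.mul_apply, Fin.sum_univ_three, Jmat, R₁, Matrix.conjTranspose_apply,
      Matrix.vecHead, Matrix.vecTail]

lemma hR₂ : R₂ᴴ * Jmat * R₂ = Jmat := by
  ext i j
  fin_cases i <;> fin_cases j <;>
    simp [Matrix.mul_apply, Fin.sum_univ_three, Jmat, R₂, Matrix.conjTranspose_apply,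
      Matrix.vecHead, Matrix.vecTail, map_ofNat] <;> norm_num

lemma hR₃ : R₃ᴴ * Jmat * R₃ = Jmat := by
  ext i j
  fin_cases i <;> fin_cases j <;>
    simp [Matrix.mul_apply, Fin.sum_univ_three, Jmat, R₃, Matrix.conjTranspose_apply,
      Matrix.vecHead, Matrix.vecTail] <;>
    ring_nf <;>
    simp [Complex.ext_iff, ← Complex.ofReal_pow, Real.sq_sqrt]

lemma hT : Tᴴ * Jmat * T = Jmat := by
  ext i j
  fin_cases i <;> fin_cases j <;>
    simp [Matrix.mul_apply, Fin.sum_univ_three, Jmat, T, Matrix.conjTranspose_apply,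
      Matrix.vecHead, Matrix.vecTail]

/-! ### Auxiliary machinery -/

def ω : ℂ := Complex.I * (√2:ℝ)

lemma homega : ω * ω = -2 := by
  have h2 : ((√2:ℝ):ℂ) * ((√2:ℝ):ℂ) = 2 := by
    rw [← Complex.ofReal_mul]
    norm_num [Real.mul_self_sqrt]
  calc ω * ω = (Complex.I * Complex.I) * (((√2:ℝ):ℂ) * ((√2:ℝ):ℂ)) := by rw [ω]; ring
  _ = -2 := by rw [Complex.I_mul_I, h2]; ring

lemma conj_omega : (starRingEnd ℂ) ω = -ω := by
  simp [ω]

lemma conj_int_omega (x y : ℤ) :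
    (starRingEnd ℂ) ((x:ℂ) + (y:ℂ)*ω) = (x:ℂ) - (y:ℂ)*ω := by
  simp [conj_omega]
  ring

lemma int_omega_eq (x y x' y' : ℤ) (h : (x:ℂ) + (y:ℂ)*ω = (x':ℂ) + (y':ℂ)*ω) :
    x = x' ∧ y = y' := by
  have h0 : ((x - x' : ℤ):ℂ) + ((y - y' : ℤ):ℂ)*ω = 0 := by push_cast; linear_combination h
  have hre := congrArg Complex.re h0
  have him := congrArg Complex.im h0
  simp [ω, Complex.add_re, Complex.add_im, Complex.mul_re, Complex.mul_im] at hre him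
  constructor
  · exact_mod_cast sub_eq_zero.mp hre
  · exact_mod_cast sub_eq_zero.mp him

lemma zpow_val_eq (U : GL (Fin 3) ℂ) (f : ℤ → Matrix (Fin 3) (Fin 3) ℂ)
    (h0 : f 0 = 1) (hs : ∀ k : ℤ, f k * (U : Matrix (Fin 3) (Fin 3) ℂ) = f (k+1)) :
    ∀ k : ℤ, ((U ^ k : GL (Fin 3) ℂ) : Matrix (Fin 3) (Fin 3) ℂ) = f k := by
  have hi : ∀ k : ℤ, f k * ((U⁻¹ : GL (Fin 3) ℂ) : Matrix (Fin 3) (Fin 3) ℂ) = f (k-1) := by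
    intro k
    have h1 := hs (k-1)
    rw [sub_add_cancel] at h1
    rw [← h1, mul_assoc]
    have hU1 : (U : Matrix (Fin 3) (Fin 3) ℂ) *
        ((U⁻¹ : GL (Fin 3) ℂ) : Matrix (Fin 3) (Fin 3) ℂ) = 1 := by
      rw [← Units.val_mul, mul_inv_cancel, Units.val_one]
    rw [hU1, mul_one]
  intro k
  induction k using Int.induction_on with
  | zero => simpa using h0.symm
  | succ i ih => rw [_root_.zpow_add_one, Units.val_mul, ih, hs]
  | pred i ih => rw [_root_.zpow_sub_one, Units.val_mul, ih, hi]

def GA : GL (Fin 3) ℂ := toGL R₂ hR₂ * toGL R₁ hR₁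
def GB : GL (Fin 3) ℂ := toGL R₃ hR₃ * toGL R₁ hR₁
def GT : GL (Fin 3) ℂ := toGL T hT

lemma GA_val : (GA : Matrix (Fin 3) (Fin 3) ℂ) = !![1,-2,-2; 0,1,2; 0,0,1] := by
  show R₂ * R₁ = _
  ext i j
  fin_cases i <;> fin_cases j <;>
    simp [R₂, R₁, Matrix.mul_apply, Fin.sum_univ_three, Matrix.vecHead, Matrix.vecTail]

lemma GB_val : (GB : Matrix (Fin 3) (Fin 3) ℂ) = !![1, ω, -1; 0, 1, ω; 0,0,1] := by
  show R₃ * R₁ = _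
  ext i j
  fin_cases i <;> fin_cases j <;>
    simp [R₃, R₁, ω, Matrix.mul_apply, Fin.sum_univ_three, Matrix.vecHead, Matrix.vecTail]

lemma GT_val : (GT : Matrix (Fin 3) (Fin 3) ℂ) = !![1, 0, ω; 0, 1, 0; 0,0,1] := by
  show T = _
  ext i j
  fin_cases i <;> fin_cases j <;>
    simp [T, ω, Matrix.vecHead, Matrix.vecTail]

lemma GA_pow (m : ℤ) : ((GA ^ m : GL (Fin 3) ℂ) : Matrix (Fin 3) (Fin 3) ℂ)
    = !![1, -2*(m:ℂ), -2*(m:ℂ)^2; 0, 1, 2*(m:ℂ); 0,0,1] := by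
  refine zpow_val_eq GA (fun m => !![1, -2*(m:ℂ), -2*(m:ℂ)^2; 0, 1, 2*(m:ℂ); 0,0,1]) ?_ ?_ m
  · ext i j
    fin_cases i <;> fin_cases j <;>
      simp [Matrix.one_fin_three, Matrix.vecHead, Matrix.vecTail]
  · intro k
    rw [GA_val]
    ext i j
    fin_cases i <;> fin_cases j <;>
      simp [Matrix.mul_apply, Fin.sum_univ_three, Matrix.vecHead, Matrix.vecTail] <;>
      push_cast <;> ring

lemma GB_pow (n : ℤ) : ((GB ^ n : GL (Fin 3) ℂ) : Matrix (Fin 3) (Fin 3) ℂ)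
    = !![1, (n:ℂ)*ω, -(n:ℂ)^2; 0, 1, (n:ℂ)*ω; 0,0,1] := by
  refine zpow_val_eq GB (fun n => !![1, (n:ℂ)*ω, -(n:ℂ)^2; 0, 1, (n:ℂ)*ω; 0,0,1]) ?_ ?_ n
  · ext i j
    fin_cases i <;> fin_cases j <;>
      simp [Matrix.one_fin_three, Matrix.vecHead, Matrix.vecTail]
  · intro k
    rw [GB_val]
    ext i j
    fin_cases i <;> fin_cases j
    all_goals simp [Matrix.mul_apply, Fin.sum_univ_three, Matrix.vecHead, Matrix.vecTail]
    all_goals push_cast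
    all_goals try ring
    all_goals linear_combination (k:ℂ) * homega

lemma GT_pow (k : ℤ) : ((GT ^ k : GL (Fin 3) ℂ) : Matrix (Fin 3) (Fin 3) ℂ)
    = !![1, 0, (k:ℂ)*ω; 0, 1, 0; 0,0,1] := by
  refine zpow_val_eq GT (fun k => !![1, 0, (k:ℂ)*ω; 0, 1, 0; 0,0,1]) ?_ ?_ k
  · ext i j
    fin_cases i <;> fin_cases j <;>
      simp [Matrix.one_fin_three, Matrix.vecHead, Matrix.vecTail]
  · intro k
    rw [GT_val]
    ext i j
    fin_cases i <;> fin_cases j <;>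
      simp [Matrix.mul_apply, Fin.sum_univ_three, Matrix.vecHead, Matrix.vecTail] <;>
      push_cast <;> ring

lemma int_sq_one (u v : ℤ) (h : u*u + 2*(v*v) = 1) : v = 0 ∧ (u = 1 ∨ u = -1) := by
  have hv : v = 0 := by
    by_contra hv
    have h1 : 1 ≤ |v| := Int.one_le_abs hv
    nlinarith [mul_self_nonneg u, abs_mul_abs_self v]
  subst hv
  have h2 : u * u = 1 := by linarith
  exact ⟨rfl, Int.eq_one_or_neg_one_of_mul_eq_one h2⟩

lemma prod_pow_val (m n k : ℤ) :
    ((GA ^ m * GB ^ n * GT ^ k : GL (Fin 3) ℂ) : Matrix (Fin 3) (Fin 3) ℂ)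
    = !![1, -2*(m:ℂ) + (n:ℂ)*ω, -2*(m:ℂ)^2 - (n:ℂ)^2 + ((k:ℂ) - 2*(m:ℂ)*(n:ℂ))*ω;
         0, 1, 2*(m:ℂ) + (n:ℂ)*ω; 0, 0, 1] := by
  rw [Units.val_mul, Units.val_mul, GA_pow, GB_pow, GT_pow]
  ext i j
  fin_cases i <;> fin_cases j <;>
    simp [Matrix.mul_apply, Fin.sum_univ_three, Matrix.vecHead, Matrix.vecTail] <;>
    ring

lemma prod_pow_val' (m n k : ℤ) :
    ((toGL R₁ hR₁ * (GA ^ m * GB ^ n * GT ^ k) : GL (Fin 3) ℂ) : Matrix (Fin 3) (Fin 3) ℂ)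
    = !![1, -2*(m:ℂ) + (n:ℂ)*ω, -2*(m:ℂ)^2 - (n:ℂ)^2 + ((k:ℂ) - 2*(m:ℂ)*(n:ℂ))*ω;
         0, -1, -(2*(m:ℂ) + (n:ℂ)*ω); 0, 0, 1] := by
  rw [Units.val_mul, prod_pow_val,
    show ((toGL R₁ hR₁ : GL (Fin 3) ℂ) : Matrix (Fin 3) (Fin 3) ℂ) = R₁ from rfl]
  ext i j
  fin_cases i <;> fin_cases j <;>
    simp [R₁, Matrix.mul_apply, Fin.sum_univ_three, Matrix.vecHead, Matrix.vecTail] <;>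
    ring
set_option maxHeartbeats 1600000 in
/-- **Generators of the stabiliser of `q∞` in `PU(2,1;O2)`**: every matrix
`M ∈ U(2,1;O2)` fixing `q∞` (i.e. mapping `(1,0,0)ᵗ` to a scalar multiple of itself)
agrees, up to sign, with an element of the subgroup of `GL(3,ℂ)` generated by
`R₁, R₂, R₃, T`. -/
theorem stabiliser_O2_generated
    (M : Matrix (Fin 3) (Fin 3) ℂ)
    (hM : ∀ i j, M i j ∈ O2)
    (hU : Mᴴ * Jmat * M = Jmat)
    (hfix : ∃ c : ℂ, M.mulVec ![1,0,0] = c • ![1,0,0]) :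
    ∃ U ∈ Subgroup.closure
        ({toGL R₁ hR₁, toGL R₂ hR₂, toGL R₃ hR₃, toGL T hT} :
          Set (GL (Fin 3) ℂ)),
      (U : Matrix (Fin 3) (Fin 3) ℂ) = M ∨ (U : Matrix (Fin 3) (Fin 3) ℂ) = -M := by
  obtain ⟨c, hc⟩ := hfix
  have h10 : M 1 0 = 0 := by
    have h := congrFun hc 1
    simpa [Matrix.mulVec, dotProduct, Fin.sum_univ_three] using h
  have h20 : M 2 0 = 0 := by
    have h := congrFun hc 2
    simpa [Matrix.mulVec, dotProduct, Fin.sum_univ_three] using h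
  have E : ∀ i j, (Mᴴ * Jmat * M) i j = Jmat i j := fun i j => by rw [hU]
  have E02 : (starRingEnd ℂ) (M 0 0) * M 2 2 = 1 := by
    have h := E 0 2
    simpa [Matrix.mul_apply, Fin.sum_univ_three, Jmat, Matrix.conjTranspose_apply, h10, h20,
      Matrix.vecHead, Matrix.vecTail] using h
  have hM00 : M 0 0 ≠ 0 := by
    intro h
    rw [h] at E02
    simp at E02
  have h21 : M 2 1 = 0 := by
    have h := E 0 1
    simp [Matrix.mul_apply, Fin.sum_univ_three, Jmat, Matrix.conjTranspose_apply, h10, h20,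
      Matrix.vecHead, Matrix.vecTail] at h
    rcases h with h | h
    · exact absurd h hM00
    · exact h
  have E11 : (starRingEnd ℂ) (M 1 1) * M 1 1 = 1 := by
    have h := E 1 1
    simpa [Matrix.mul_apply, Fin.sum_univ_three, Jmat, Matrix.conjTranspose_apply, h10, h20, h21,
      Matrix.vecHead, Matrix.vecTail] using h
  have E12 : (starRingEnd ℂ) (M 1 1) * M 1 2 + (starRingEnd ℂ) (M 0 1) * M 2 2 = 0 := by
    have h := E 1 2
    simpa [Matrix.mul_apply, Fin.sum_univ_three, Jmat, Matrix.conjTranspose_apply, h10, h20, h21,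
      Matrix.vecHead, Matrix.vecTail] using h
  have E22 : (starRingEnd ℂ) (M 2 2) * M 0 2 + (starRingEnd ℂ) (M 1 2) * M 1 2
      + (starRingEnd ℂ) (M 0 2) * M 2 2 = 0 := by
    have h := E 2 2
    simpa [Matrix.mul_apply, Fin.sum_univ_three, Jmat, Matrix.conjTranspose_apply, h10, h20, h21,
      Matrix.vecHead, Matrix.vecTail] using h
  
  obtain ⟨c₁, c₂, h00⟩ := hM 0 0
  obtain ⟨a₁, a₂, h01⟩ := hM 0 1
  obtain ⟨b₁, b₂, h02⟩ := hM 0 2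
  obtain ⟨d₁, d₂, h11⟩ := hM 1 1
  obtain ⟨e₁, e₂, h12⟩ := hM 1 2
  obtain ⟨f₁, f₂, h22⟩ := hM 2 2
  rw [show (Complex.I * ((√2:ℝ):ℂ)) = ω from rfl] at h00 h01 h02 h11 h12 h22
  rw [h00, h22, conj_int_omega] at E02
  rw [h11, conj_int_omega] at E11
  rw [h01, h22, h11, h12, conj_int_omega, conj_int_omega] at E12
  rw [h02, h22, h12, conj_int_omega, conj_int_omega, conj_int_omega] at E22
  obtain ⟨K1a, K1b⟩ := int_omega_eq (c₁*f₁ + 2*c₂*f₂) (c₁*f₂ - c₂*f₁) 1 0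
    (by push_cast; linear_combination E02 + (c₂:ℂ)*(f₂:ℂ)*homega)
  obtain ⟨K2a, -⟩ := int_omega_eq (d₁*d₁ + 2*(d₂*d₂)) 0 1 0
    (by push_cast; linear_combination E11 + (d₂:ℂ)*(d₂:ℂ)*homega)
  obtain ⟨K3a, K3b⟩ := int_omega_eq (a₁*f₁ + 2*(a₂*f₂) + d₁*e₁ + 2*(d₂*e₂))
    (a₁*f₂ - a₂*f₁ + d₁*e₂ - d₂*e₁) 0 0
    (by push_cast; linear_combination E12 + ((a₂:ℂ)*(f₂:ℂ) + (d₂:ℂ)*(e₂:ℂ))*homega)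
  obtain ⟨K4a, -⟩ := int_omega_eq (2*(b₁*f₁) + 4*(b₂*f₂) + e₁*e₁ + 2*(e₂*e₂)) 0 0 0
    (by push_cast; linear_combination E22 + ((b₂:ℂ)*(f₂:ℂ) + (e₂:ℂ)*(e₂:ℂ) + (f₂:ℂ)*(b₂:ℂ))*homega)
  have hnorm : (c₁*c₁ + 2*(c₂*c₂)) * (f₁*f₁ + 2*(f₂*f₂)) = 1 := by
    linear_combination (c₁*f₁ + 2*c₂*f₂ + 1)*K1a + 2*(c₁*f₂ - c₂*f₁)*K1b
  have hA1 : c₁*c₁ + 2*(c₂*c₂) = 1 :=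
    Int.eq_one_of_mul_eq_one_right (by nlinarith [mul_self_nonneg c₁, mul_self_nonneg c₂]) hnorm
  obtain ⟨hc₂, hc₁⟩ := int_sq_one c₁ c₂ hA1
  obtain ⟨hd₂, hd₁⟩ := int_sq_one d₁ d₂ K2a
  subst hc₂; subst hd₂
  
  have m1 : toGL R₁ hR₁ ∈ Subgroup.closure
      ({toGL R₁ hR₁, toGL R₂ hR₂, toGL R₃ hR₃, toGL T hT} : Set (GL (Fin 3) ℂ)) :=
    Subgroup.subset_closure (by simp)
  have m2 : toGL R₂ hR₂ ∈ Subgroup.closure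
      ({toGL R₁ hR₁, toGL R₂ hR₂, toGL R₃ hR₃, toGL T hT} : Set (GL (Fin 3) ℂ)) :=
    Subgroup.subset_closure (by simp)
  have m3 : toGL R₃ hR₃ ∈ Subgroup.closure
      ({toGL R₁ hR₁, toGL R₂ hR₂, toGL R₃ hR₃, toGL T hT} : Set (GL (Fin 3) ℂ)) :=
    Subgroup.subset_closure (by simp)
  have mGT : GT ∈ Subgroup.closure
      ({toGL R₁ hR₁, toGL R₂ hR₂, toGL R₃ hR₃, toGL T hT} : Set (GL (Fin 3) ℂ)) :=
    Subgroup.subset_closure (by simp [GT])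
  have mGA : GA ∈ Subgroup.closure
      ({toGL R₁ hR₁, toGL R₂ hR₂, toGL R₃ hR₃, toGL T hT} : Set (GL (Fin 3) ℂ)) :=
    mul_mem m2 m1
  have mGB : GB ∈ Subgroup.closure
      ({toGL R₁ hR₁, toGL R₂ hR₂, toGL R₃ hR₃, toGL T hT} : Set (GL (Fin 3) ℂ)) :=
    mul_mem m3 m1
  rcases hc₁ with rfl | rfl <;> rcases hd₁ with rfl | rfl
  · -- c₁ = 1, d₁ = 1
    have hf₁ : f₁ = 1 := by omega
    have hf₂ : f₂ = 0 := by omega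
    subst hf₁; subst hf₂
    have he₁ : e₁ = -a₁ := by omega
    have he₂ : e₂ = a₂ := by omega
    have hee₁ : e₁*e₁ = a₁*a₁ := by rw [he₁]; ring
    have hee₂ : e₂*e₂ = a₂*a₂ := by rw [he₂]
    have hsq : a₁ * a₁ = 2 * (-b₁ - a₂*a₂) := by linarith
    have h2a : (2:ℤ) ∣ a₁ := by
      rcases (Int.prime_two.dvd_mul (a := a₁) (b := a₁)).mp ⟨_, hsq⟩ with h | h <;> exact h
    obtain ⟨α, rfl⟩ := h2a
    have hb₁ : b₁ = -(2*(α*α)) - a₂*a₂ := by linarith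
    refine ⟨GA ^ (-α) * GB ^ a₂ * GT ^ (b₂ - 2*α*a₂),
      mul_mem (mul_mem (Subgroup.zpow_mem _ mGA _) (Subgroup.zpow_mem _ mGB _))
        (Subgroup.zpow_mem _ mGT _), Or.inl ?_⟩
    rw [prod_pow_val]
    ext i j
    fin_cases i <;> fin_cases j <;>
      simp [Matrix.neg_apply, h00, h01, h02, h10, h11, h12, h20, h21, h22, he₁, he₂, hb₁,
        Matrix.vecHead, Matrix.vecTail] <;>
      push_cast <;> ring
  · -- c₁ = 1, d₁ = -1
    have hf₁ : f₁ = 1 := by omega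
    have hf₂ : f₂ = 0 := by omega
    subst hf₁; subst hf₂
    have he₁ : e₁ = a₁ := by omega
    have he₂ : e₂ = -a₂ := by omega
    have hee₁ : e₁*e₁ = a₁*a₁ := by rw [he₁]
    have hee₂ : e₂*e₂ = a₂*a₂ := by rw [he₂]; ring
    have hsq : a₁ * a₁ = 2 * (-b₁ - a₂*a₂) := by linarith
    have h2a : (2:ℤ) ∣ a₁ := by
      rcases (Int.prime_two.dvd_mul (a := a₁) (b := a₁)).mp ⟨_, hsq⟩ with h | h <;> exact h
    obtain ⟨α, rfl⟩ := h2a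
    have hb₁ : b₁ = -(2*(α*α)) - a₂*a₂ := by linarith
    refine ⟨toGL R₁ hR₁ * (GA ^ (-α) * GB ^ a₂ * GT ^ (b₂ - 2*α*a₂)),
      mul_mem m1 (mul_mem (mul_mem (Subgroup.zpow_mem _ mGA _) (Subgroup.zpow_mem _ mGB _))
        (Subgroup.zpow_mem _ mGT _)), Or.inl ?_⟩
    rw [prod_pow_val']
    ext i j
    fin_cases i <;> fin_cases j <;>
      simp [Matrix.neg_apply, h00, h01, h02, h10, h11, h12, h20, h21, h22, he₁, he₂, hb₁,
        Matrix.vecHead, Matrix.vecTail] <;>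
      push_cast <;> ring
  · -- c₁ = -1, d₁ = 1
    have hf₁ : f₁ = -1 := by omega
    have hf₂ : f₂ = 0 := by omega
    subst hf₁; subst hf₂
    have he₁ : e₁ = a₁ := by omega
    have he₂ : e₂ = -a₂ := by omega
    have hee₁ : e₁*e₁ = a₁*a₁ := by rw [he₁]
    have hee₂ : e₂*e₂ = a₂*a₂ := by rw [he₂]; ring
    have hsq : a₁ * a₁ = 2 * (b₁ - a₂*a₂) := by linarith
    have h2a : (2:ℤ) ∣ a₁ := by
      rcases (Int.prime_two.dvd_mul (a := a₁) (b := a₁)).mp ⟨_, hsq⟩ with h | h <;> exact h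
    obtain ⟨α, rfl⟩ := h2a
    have hb₁ : b₁ = 2*(α*α) + a₂*a₂ := by linarith
    refine ⟨toGL R₁ hR₁ * (GA ^ α * GB ^ (-a₂) * GT ^ (-b₂ - 2*α*a₂)),
      mul_mem m1 (mul_mem (mul_mem (Subgroup.zpow_mem _ mGA _) (Subgroup.zpow_mem _ mGB _))
        (Subgroup.zpow_mem _ mGT _)), Or.inr ?_⟩
    rw [prod_pow_val']
    ext i j
    fin_cases i <;> fin_cases j <;>
      simp [Matrix.neg_apply, h00, h01, h02, h10, h11, h12, h20, h21, h22, he₁, he₂, hb₁,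
        Matrix.vecHead, Matrix.vecTail] <;>
      push_cast <;> ring
  · -- c₁ = -1, d₁ = -1
    have hf₁ : f₁ = -1 := by omega
    have hf₂ : f₂ = 0 := by omega
    subst hf₁; subst hf₂
    have he₁ : e₁ = -a₁ := by omega
    have he₂ : e₂ = a₂ := by omega
    have hee₁ : e₁*e₁ = a₁*a₁ := by rw [he₁]; ring
    have hee₂ : e₂*e₂ = a₂*a₂ := by rw [he₂]
    have hsq : a₁ * a₁ = 2 * (b₁ - a₂*a₂) := by linarith
    have h2a : (2:ℤ) ∣ a₁ := by
      rcases (Int.prime_two.dvd_mul (a := a₁) (b := a₁)).mp ⟨_, hsq⟩ with h | h <;> exact h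
    obtain ⟨α, rfl⟩ := h2a
    have hb₁ : b₁ = 2*(α*α) + a₂*a₂ := by linarith
    refine ⟨GA ^ α * GB ^ (-a₂) * GT ^ (-b₂ - 2*α*a₂),
      mul_mem (mul_mem (Subgroup.zpow_mem _ mGA _) (Subgroup.zpow_mem _ mGB _))
        (Subgroup.zpow_mem _ mGT _), Or.inr ?_⟩
    rw [prod_pow_val]
    ext i j
    fin_cases i <;> fin_cases j <;>
      simp [Matrix.neg_apply, h00, h01, h02, h10, h11, h12, h20, h21, h22, he₁, he₂, hb₁,
        Matrix.vecHead, Matrix.vecTail] <;>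
      push_cast <;> ring

end
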